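/- Let M_d be the K_d × K_d matrix with M_d(k,k) = dα_{N+1} + Σ_{n=1}^N (k_n+α_n−1)k_n, M_d(k, k+e_n−e_m) = (k_n+α_n)(k_n+1) for n ≠ m, and 0 otherwise. Then every eigenvalue of M_d is greater than or equal to d α_{N+1}. -/

import Mathlib

noncomputable section

/-- The multi-index k + e_n − e_m (ℕ-valued; if k_m = 0 the result leaves K_d and
is killed by the support condition below). -/
def shiftIdx (N : ℕ) (k : Fin N → ℕ) (n m : Fin N) : Fin N → ℕ :=
  fun i => k i + (if i = n then 1 else 0) - (if i = m then 1 else 0)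

namespace MdProof

variable {N : ℕ}

def addIdx (k : Fin N → ℕ) (n : Fin N) : Fin N → ℕ := fun i => k i + if i = n then 1 else 0
def subIdx (k : Fin N → ℕ) (n : Fin N) : Fin N → ℕ := fun i => k i - if i = n then 1 else 0

lemma sum_addIdx (k : Fin N → ℕ) (n : Fin N) : ∑ i, addIdx k n i = (∑ i, k i) + 1 := by
  unfold addIdx
  rw [Finset.sum_add_distrib]
  simp

lemma addIdx_subIdx_self (k : Fin N → ℕ) (n : Fin N) (h : k n ≠ 0) :
    addIdx (subIdx k n) n = k := by
  funext i
  by_cases hi : i = n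
  · subst hi; simp [addIdx, subIdx]; omega
  · simp [addIdx, subIdx, hi]

lemma subIdx_addIdx (j : Fin N → ℕ) (n : Fin N) : subIdx (addIdx j n) n = j := by
  funext i
  by_cases hi : i = n
  · subst hi; simp [addIdx, subIdx]
  · simp [addIdx, subIdx, hi]

lemma addIdx_subIdx_shift (k : Fin N → ℕ) (n m : Fin N) (h : k n ≠ 0) :
    addIdx (subIdx k n) m = shiftIdx N k m n := by
  funext i
  unfold addIdx subIdx shiftIdx
  by_cases h1 : i = n <;> by_cases h2 : i = m <;> subst_vars <;> simp_all <;> omega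

lemma shiftIdx_self (k : Fin N → ℕ) (n : Fin N) : shiftIdx N k n n = k := by
  funext i
  unfold shiftIdx
  by_cases h : i = n <;> simp [h]

lemma shiftIdx_eq_addIdx (k : Fin N → ℕ) (n m : Fin N) (hnm : n ≠ m) (h : k m = 0) :
    shiftIdx N k n m = addIdx k n := by
  funext i
  unfold shiftIdx addIdx
  by_cases h1 : i = m
  · subst h1
    rw [if_neg (fun hh => hnm hh.symm)]
    simp [h]
  · simp [h1]

def bet (α : Fin (N+1) → ℝ) (n : Fin N) (j : ℕ) : ℝ := ((j:ℝ) + α n.castSucc) * ((j:ℝ) + 1)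

def wt (α : Fin (N+1) → ℝ) (k : Fin N → ℕ) : ℝ := ∏ n, ∏ t ∈ Finset.range (k n), bet α n t

lemma bet_pos {α : Fin (N+1) → ℝ} (hα : ∀ i, 0 < α i) (n : Fin N) (j : ℕ) :
    0 < bet α n j := by
  have := hα n.castSucc
  unfold bet
  positivity

lemma wt_pos {α : Fin (N+1) → ℝ} (hα : ∀ i, 0 < α i) (k : Fin N → ℕ) : 0 < wt α k :=
  Finset.prod_pos fun n _ => Finset.prod_pos fun t _ => bet_pos hα n t

lemma wt_addIdx (α : Fin (N+1) → ℝ) (k : Fin N → ℕ) (n : Fin N) :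
    wt α (addIdx k n) = bet α n (k n) * wt α k := by
  unfold wt
  rw [Finset.prod_eq_prod_diff_singleton_mul (Finset.mem_univ n)
        (fun i => ∏ t ∈ Finset.range (addIdx k n i), bet α i t),
      Finset.prod_eq_prod_diff_singleton_mul (Finset.mem_univ n)
        (fun i => ∏ t ∈ Finset.range (k i), bet α i t)]
  have h2 : ∏ i ∈ Finset.univ \ {n}, (∏ t ∈ Finset.range (addIdx k n i), bet α i t)
      = ∏ i ∈ Finset.univ \ {n}, (∏ t ∈ Finset.range (k i), bet α i t) := by
    refine Finset.prod_congr rfl fun i hi => ?_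
    have : i ≠ n := by simpa using (Finset.mem_sdiff.1 hi).2
    simp [addIdx, this]
  have h1 : addIdx k n n = k n + 1 := by simp [addIdx]
  rw [h2, h1, Finset.prod_range_succ]
  ring

end MdProof

namespace MdProof

variable {N : ℕ}

lemma sum_split (f : Fin N → ℝ) (n : Fin N) :
    ∑ m, f m = f n + ∑ m, (if m ≠ n then f m else 0) := by
  have h : ∀ m : Fin N, f m = (if m = n then f m else 0) + (if m ≠ n then f m else 0) := by
    intro m; by_cases hm : m = n <;> simp [hm]
  rw [Finset.sum_congr rfl (fun m _ => h m), Finset.sum_add_distrib]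
  congr 1
  simp

lemma perk (α : Fin (N+1) → ℝ) (v : (Fin N → ℕ) → ℝ) (d : ℕ)
    (hsupp : ∀ k : Fin N → ℕ, (∑ i, k i) ≠ d → v k = 0)
    (k : Fin N → ℕ) (hk : (∑ i, k i) = d) :
    ∑ n, (if k n ≠ 0 then
        wt α (subIdx k n) * (bet α n ((subIdx k n) n) * v (addIdx (subIdx k n) n)) *
          (∑ m, bet α m ((subIdx k n) m) * v (addIdx (subIdx k n) m))
      else 0)
    = wt α k * v k *
        ((∑ n, ((k n : ℝ) + α (Fin.castSucc n) - 1) * (k n : ℝ)) * v k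
          + ∑ n, ∑ m, (if n ≠ m then
              ((k n : ℝ) + α (Fin.castSucc n)) * ((k n : ℝ) + 1) * v (shiftIdx N k n m)
            else 0)) := by
  -- swap the cross-term sum
  have hswap : (∑ n, ∑ m, (if n ≠ m then
        ((k n : ℝ) + α (Fin.castSucc n)) * ((k n : ℝ) + 1) * v (shiftIdx N k n m) else 0))
      = ∑ n, ∑ m, (if m ≠ n then
        ((k m : ℝ) + α (Fin.castSucc m)) * ((k m : ℝ) + 1) * v (shiftIdx N k m n) else 0) :=
    Finset.sum_comm
  rw [hswap]
  have hcollect : ((∑ n, ((k n : ℝ) + α (Fin.castSucc n) - 1) * (k n : ℝ)) * v k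
      + ∑ n, ∑ m, (if m ≠ n then
          ((k m : ℝ) + α (Fin.castSucc m)) * ((k m : ℝ) + 1) * v (shiftIdx N k m n) else 0))
      = ∑ n, ((((k n : ℝ) + α (Fin.castSucc n) - 1) * (k n : ℝ)) * v k
          + ∑ m, (if m ≠ n then
          ((k m : ℝ) + α (Fin.castSucc m)) * ((k m : ℝ) + 1) * v (shiftIdx N k m n) else 0)) := by
    rw [Finset.sum_add_distrib, Finset.sum_mul]
  rw [hcollect, Finset.mul_sum]
  refine Finset.sum_congr rfl fun n _ => ?_
  by_cases h : k n = 0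
  · rw [if_neg (by simpa using h)]
    have hz : ∀ m : Fin N, (if m ≠ n then
        ((k m : ℝ) + α (Fin.castSucc m)) * ((k m : ℝ) + 1) * v (shiftIdx N k m n) else 0) = 0 := by
      intro m
      by_cases hm : m ≠ n
      · rw [if_pos hm]
        have : v (shiftIdx N k m n) = 0 := by
          apply hsupp
          rw [shiftIdx_eq_addIdx k m n hm h, sum_addIdx, hk]
          omega
        rw [this, mul_zero]
      · rw [if_neg hm]
    rw [Finset.sum_eq_zero fun m _ => hz m]
    simp [h]
  · rw [if_pos h]
    have hsub_n : (subIdx k n) n = k n - 1 := by simp [subIdx]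
    have hadd : addIdx (subIdx k n) n = k := addIdx_subIdx_self k n h
    have hw : wt α k = bet α n (k n - 1) * wt α (subIdx k n) := by
      conv_lhs => rw [← hadd, wt_addIdx, hsub_n]
    have hinner : (∑ m, bet α m ((subIdx k n) m) * v (addIdx (subIdx k n) m))
        = ∑ m, bet α m ((subIdx k n) m) * v (shiftIdx N k m n) := by
      refine Finset.sum_congr rfl fun m _ => ?_
      rw [addIdx_subIdx_shift k n m h]
    have hsplit : (∑ m, bet α m ((subIdx k n) m) * v (shiftIdx N k m n))
        = bet α n (k n - 1) * v k
          + ∑ m, (if m ≠ n then bet α m (k m) * v (shiftIdx N k m n) else 0) := by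
      rw [sum_split (fun m => bet α m ((subIdx k n) m) * v (shiftIdx N k m n)) n]
      rw [hsub_n, shiftIdx_self]
      congr 1
      refine Finset.sum_congr rfl fun m _ => ?_
      by_cases hm : m ≠ n
      · rw [if_pos hm, if_pos hm]
        have : (subIdx k n) m = k m := by simp [subIdx, hm]
        rw [this]
      · rw [if_neg hm, if_neg hm]
    have hcast : bet α n (k n - 1) = ((k n : ℝ) + α (Fin.castSucc n) - 1) * (k n : ℝ) := by
      unfold bet
      have h1 : ((k n - 1 : ℕ) : ℝ) = (k n : ℝ) - 1 := by
        rw [Nat.cast_sub (by omega)]; norm_num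
      rw [h1]
      ring
    have hbet : ∀ m : Fin N, bet α m (k m)
        = ((k m : ℝ) + α (Fin.castSucc m)) * ((k m : ℝ) + 1) := fun m => rfl
    rw [hinner, hsplit, hsub_n, hadd, hw, hcast]
    simp only [hbet]
    ring


lemma core (α : Fin (N+1) → ℝ) (v : (Fin N → ℕ) → ℝ) (d : ℕ) (hd : 1 ≤ d)
    (hsupp : ∀ k : Fin N → ℕ, (∑ i, k i) ≠ d → v k = 0) :
    ∑ k ∈ Finset.Nat.antidiagonalTuple N d, wt α k * v k *
      ((∑ n, ((k n : ℝ) + α (Fin.castSucc n) - 1) * (k n : ℝ)) * v k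
        + ∑ n, ∑ m, (if n ≠ m then
            ((k n : ℝ) + α (Fin.castSucc n)) * ((k n : ℝ) + 1) * v (shiftIdx N k n m)
          else 0))
    = ∑ j ∈ Finset.Nat.antidiagonalTuple N (d-1),
        wt α j * (∑ m, bet α m (j m) * v (addIdx j m)) ^ 2 := by
  -- expand the square on the RHS
  have hexp : ∀ j : Fin N → ℕ, wt α j * (∑ m, bet α m (j m) * v (addIdx j m)) ^ 2
      = ∑ n, (wt α j * (bet α n (j n) * v (addIdx j n)) *
          (∑ m, bet α m (j m) * v (addIdx j m))) := by
    intro j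
    rw [pow_two, Finset.sum_mul, Finset.mul_sum]
    refine Finset.sum_congr rfl fun n _ => ?_
    ring
  rw [Finset.sum_congr rfl fun j _ => hexp j]
  -- turn the RHS into a sum over pairs
  rw [← Finset.sum_product' (s := Finset.Nat.antidiagonalTuple N (d-1)) (t := Finset.univ)
      (f := fun j n => wt α j * (bet α n (j n) * v (addIdx j n)) *
          (∑ m, bet α m (j m) * v (addIdx j m)))]
  -- bijection with pairs (k, n) with k ∈ K_d, k n ≠ 0
  rw [Finset.sum_nbij' (i := fun p : (Fin N → ℕ) × Fin N => (addIdx p.1 p.2, p.2))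
      (j := fun p : (Fin N → ℕ) × Fin N => (subIdx p.1 p.2, p.2))
      (t := (Finset.Nat.antidiagonalTuple N d ×ˢ Finset.univ).filter fun p => p.1 p.2 ≠ 0)
      (g := fun p => wt α (subIdx p.1 p.2) * (bet α p.2 ((subIdx p.1 p.2) p.2) *
          v (addIdx (subIdx p.1 p.2) p.2)) *
          (∑ m, bet α m ((subIdx p.1 p.2) m) * v (addIdx (subIdx p.1 p.2) m)))
      (hi := ?_) (hj := ?_) (left_neg := ?_) (right_neg := ?_) (h := ?_)]
  · -- turn filtered pair sum into iterated sum with ite, then use perk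
    rw [Finset.sum_filter, Finset.sum_product]
    rw [Finset.sum_congr rfl fun k hk => perk α v d hsupp k
        (Finset.Nat.mem_antidiagonalTuple.1 hk)]
  · rintro ⟨j, n⟩ hp
    simp only [Finset.mem_product, Finset.Nat.mem_antidiagonalTuple] at hp
    simp only [Finset.mem_filter, Finset.mem_product, Finset.Nat.mem_antidiagonalTuple,
      Finset.mem_univ, and_true]
    constructor
    · rw [sum_addIdx, hp.1]; omega
    · simp [addIdx]
  · rintro ⟨k, n⟩ hp
    simp only [Finset.mem_filter, Finset.mem_product, Finset.Nat.mem_antidiagonalTuple,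
      Finset.mem_univ, and_true] at hp
    simp only [Finset.mem_product, Finset.Nat.mem_antidiagonalTuple, Finset.mem_univ, and_true]
    have := sum_addIdx (subIdx k n) n
    rw [addIdx_subIdx_self k n hp.2, hp.1] at this
    omega
  · rintro ⟨j, n⟩ hp
    simp [subIdx_addIdx]
  · rintro ⟨k, n⟩ hp
    simp only [Finset.mem_filter, Finset.mem_product, Finset.Nat.mem_antidiagonalTuple,
      Finset.mem_univ, and_true] at hp
    simp [addIdx_subIdx_self k n hp.2]
  · rintro ⟨j, n⟩ hp
    simp [subIdx_addIdx]

end MdProof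

/-- Every (real) eigenvalue of the matrix M_d on K_d = {k ∈ ℤ_+^N : Σk_i = d}, with
M_d(k,k) = dα_{N+1} + Σ_n (k_n+α_n−1)k_n, M_d(k,k+e_n−e_m) = (k_n+α_n)(k_n+1) for n ≠ m
and 0 otherwise, is at least d·α_{N+1}.  An eigenvector is encoded as a function v on
multi-indices supported on K_d. -/
theorem Md_eigenvalue_lower_bound (N d : ℕ) (hN : 2 ≤ N) (hd : 2 ≤ d)
    (α : Fin (N + 1) → ℝ) (hα : ∀ k, 0 < α k) (lam : ℝ)
    (v : (Fin N → ℕ) → ℝ)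
    (hsupp : ∀ k : Fin N → ℕ, (∑ i, k i) ≠ d → v k = 0)
    (hv : v ≠ 0)
    (heig : ∀ k : Fin N → ℕ, (∑ i, k i) = d →
      ((d : ℝ) * α (Fin.last N) + ∑ n, ((k n : ℝ) + α (Fin.castSucc n) - 1) * (k n : ℝ)) * v k
        + ∑ n, ∑ m, (if n ≠ m then
            ((k n : ℝ) + α (Fin.castSucc n)) * ((k n : ℝ) + 1) * v (shiftIdx N k n m)
          else 0)
      = lam * v k) :
    (d : ℝ) * α (Fin.last N) ≤ lam := by
  classical
  open MdProof in
  have htpos : 0 < ∑ k ∈ Finset.Nat.antidiagonalTuple N d, wt α k * (v k * v k) := by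
    obtain ⟨k0, hk0⟩ : ∃ k0, v k0 ≠ 0 := by
      by_contra hc; push_neg at hc; exact hv (funext hc)
    have hk0m : k0 ∈ Finset.Nat.antidiagonalTuple N d :=
      Finset.Nat.mem_antidiagonalTuple.2 (by
        by_contra hs; exact hk0 (hsupp k0 hs))
    have hterm : 0 < wt α k0 * (v k0 * v k0) :=
      mul_pos (wt_pos hα k0) (mul_self_pos.2 hk0)
    have hnn : ∀ k ∈ Finset.Nat.antidiagonalTuple N d, 0 ≤ wt α k * (v k * v k) := fun k _ =>
      mul_nonneg (wt_pos hα k).le (mul_self_nonneg _)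
    exact lt_of_lt_of_le hterm (Finset.single_le_sum hnn hk0m)
  have hQnn : 0 ≤ ∑ j ∈ Finset.Nat.antidiagonalTuple N (d-1),
      MdProof.wt α j * (∑ m, MdProof.bet α m (j m) * v (MdProof.addIdx j m)) ^ 2 :=
    Finset.sum_nonneg fun j _ =>
      mul_nonneg (MdProof.wt_pos hα j).le (sq_nonneg _)
  have key : lam * ∑ k ∈ Finset.Nat.antidiagonalTuple N d, MdProof.wt α k * (v k * v k)
      = (d : ℝ) * α (Fin.last N) *
          (∑ k ∈ Finset.Nat.antidiagonalTuple N d, MdProof.wt α k * (v k * v k))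
        + ∑ j ∈ Finset.Nat.antidiagonalTuple N (d-1),
            MdProof.wt α j * (∑ m, MdProof.bet α m (j m) * v (MdProof.addIdx j m)) ^ 2 := by
    rw [← MdProof.core α v d (by omega) hsupp]
    rw [Finset.mul_sum, Finset.mul_sum, ← Finset.sum_add_distrib]
    refine Finset.sum_congr rfl fun k hk => ?_
    have hk' := Finset.Nat.mem_antidiagonalTuple.1 hk
    have h := heig k hk'
    have h2 : MdProof.wt α k * v k *
        (((d : ℝ) * α (Fin.last N)
            + ∑ n, ((k n : ℝ) + α (Fin.castSucc n) - 1) * (k n : ℝ)) * v k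
          + ∑ n, ∑ m, (if n ≠ m then
              ((k n : ℝ) + α (Fin.castSucc n)) * ((k n : ℝ) + 1) * v (shiftIdx N k n m)
            else 0))
        = MdProof.wt α k * v k * (lam * v k) := by rw [h]
    nlinarith [h2]
  nlinarith [key, htpos, hQnn]

end
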